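/- Let V be a differential algebra with λ-bracket given on generators by a matrix H ∈ Mat_{I×I}V[λ] via the Master Formula. Then the λ-bracket is skew-symmetric, i.e. {f_λ g} = −{g_{−λ−∂} f} for all f,g ∈ V, if and only if skew-symmetry holds on the generators u_i, which is equivalent to skewadjointness of the matrix differential operator H(∂). -/

import Mathlib

/-!
STATEMENT 11: Let `V = F[u_i^{(n)} | i ∈ I, n ∈ ℕ]` with derivation
`∂ u_i^{(n)} = u_i^{(n+1)}`, and let `H = (H_{ij}(λ))` be a matrix of polynomials
in `λ` with coefficients in `V`.  The λ-bracket defined by the Master Formula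
`{f_λ g}_H = ∑ (∂g/∂u_j^{(n)}) (λ+∂)^n H_{ji}(λ+∂) (−λ−∂)^m (∂f/∂u_i^{(m)})`
is skew-symmetric (`{f_λ g} = −{g_{−λ−∂} f}` for all `f, g`) iff skew-symmetry
holds on the generators `u_i = u_i^{(0)}`, and the latter is equivalent to
skewadjointness of `H`, i.e. `H_{ij}(λ) = −H_{ji}(−λ−∂)`.

λ-polynomials are elements of `Polynomial V`; `(λ+∂)` and `(−λ−∂)` act on
`Polynomial V` with `∂` applied to coefficients.
-/

open Polynomial

variable {V : Type*} [CommRing V]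

/-- `∂` applied to the coefficients of a λ-polynomial. -/
noncomputable def derPoly (d : V → V) (p : Polynomial V) : Polynomial V :=
  p.sum fun n c => Polynomial.C (d c) * Polynomial.X ^ n

/-- The operator `λ + ∂` on λ-polynomials. -/
noncomputable def lamPlusDel (d : V → V) (p : Polynomial V) : Polynomial V :=
  Polynomial.X * p + derPoly d p

/-- The operator `−λ − ∂` on λ-polynomials. -/
noncomputable def negLamDel (d : V → V) (p : Polynomial V) : Polynomial V :=
  -(Polynomial.X * p) - derPoly d p

/-- `q = {f_λ g} ↦ −{f_{−λ−∂} g}`-type transform: sends `∑ λ^n c_n` to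
`−∑ (−λ−∂)^n c_n`. -/
noncomputable def skewTransform (d : V → V) (q : Polynomial V) : Polynomial V :=
  -(q.sum fun n c => (negLamDel d)^[n] (Polynomial.C c))

section basics
variable {d : V → V}

lemma d_zero (hA : ∀ a b, d (a + b) = d a + d b) : d 0 = 0 := by
  have h := (hA 0 0).symm
  rw [add_zero] at h
  linear_combination h

lemma d_neg (hA : ∀ a b, d (a + b) = d a + d b) (a : V) : d (-a) = - d a := by
  have h := hA a (-a)
  rw [add_neg_cancel, d_zero hA] at h
  linear_combination -h

lemma derPoly_coeff (hA : ∀ a b, d (a + b) = d a + d b) (p : Polynomial V) (n : ℕ) :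
    (derPoly d p).coeff n = d (p.coeff n) := by
  classical
  rw [derPoly, Polynomial.sum_def, Polynomial.finset_sum_coeff]
  simp only [Polynomial.coeff_C_mul, Polynomial.coeff_X_pow, mul_ite, mul_one, mul_zero]
  rw [Finset.sum_ite_eq p.support n (fun m => d (p.coeff m))]
  split_ifs with h
  · rfl
  · rw [Polynomial.notMem_support_iff.mp h, d_zero hA]

lemma derPoly_add (hA : ∀ a b, d (a + b) = d a + d b) (p q : Polynomial V) :
    derPoly d (p + q) = derPoly d p + derPoly d q := by
  ext n; simp [derPoly_coeff hA, hA]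

lemma derPoly_neg (hA : ∀ a b, d (a + b) = d a + d b) (p : Polynomial V) :
    derPoly d (-p) = - derPoly d p := by
  ext n; simp [derPoly_coeff hA, d_neg hA]

lemma derPoly_C (hA : ∀ a b, d (a + b) = d a + d b) (a : V) :
    derPoly d (Polynomial.C a) = Polynomial.C (d a) := by
  ext n
  rw [derPoly_coeff hA]
  rcases eq_or_ne n 0 with rfl | h
  · simp
  · simp [Polynomial.coeff_C, h, d_zero hA]

lemma derPoly_X_mul (hA : ∀ a b, d (a + b) = d a + d b) (p : Polynomial V) :
    derPoly d (X * p) = X * derPoly d p := by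
  ext n
  rcases n with _ | n
  · simp [derPoly_coeff hA, d_zero hA]
  · simp [derPoly_coeff hA, Polynomial.coeff_X_mul]

lemma d_sum (hA : ∀ a b, d (a + b) = d a + d b) {α : Type*} (s : Finset α) (f : α → V) :
    d (∑ i ∈ s, f i) = ∑ i ∈ s, d (f i) := by
  classical
  induction s using Finset.induction_on with
  | empty => simpa using d_zero hA
  | insert a s' h ih =>
      rw [Finset.sum_insert h, Finset.sum_insert h, hA, ih]

lemma derPoly_mul (hA : ∀ a b, d (a + b) = d a + d b)
    (hM : ∀ a b, d (a * b) = a * d b + d a * b) (p q : Polynomial V) :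
    derPoly d (p * q) = derPoly d p * q + p * derPoly d q := by
  ext n
  rw [Polynomial.coeff_add, Polynomial.coeff_mul, Polynomial.coeff_mul, derPoly_coeff hA,
    Polynomial.coeff_mul, d_sum hA, ← Finset.sum_add_distrib]
  refine Finset.sum_congr rfl fun x _ => ?_
  rw [hM, derPoly_coeff hA, derPoly_coeff hA]; ring

lemma d_one (hM : ∀ a b, d (a * b) = a * d b + d a * b) : d 1 = 0 := by
  have h := hM 1 1
  rw [one_mul, mul_one] at h
  linear_combination -h

end basics

/-- evaluation `p(λ+∂)` applied to `w`. -/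
noncomputable def appP (d : V → V) (p w : Polynomial V) : Polynomial V :=
  p.sum fun k a => Polynomial.C a * (lamPlusDel d)^[k] w

set_option linter.unusedSectionVars false

section ops
variable {d : V → V} (hA : ∀ a b, d (a + b) = d a + d b)
  (hM : ∀ a b, d (a * b) = a * d b + d a * b)
include hA hM

lemma negLamDel_eq (p : Polynomial V) : negLamDel d p = -(lamPlusDel d p) := by
  simp [negLamDel, lamPlusDel]; ring

lemma lamPlusDel_add (p q : Polynomial V) :
    lamPlusDel d (p + q) = lamPlusDel d p + lamPlusDel d q := by
  simp [lamPlusDel, derPoly_add hA]; ring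

lemma lamPlusDel_neg (p : Polynomial V) : lamPlusDel d (-p) = -(lamPlusDel d p) := by
  simp [lamPlusDel, derPoly_neg hA]; ring

lemma lamPlusDel_zero : lamPlusDel d 0 = 0 := by
  simp [lamPlusDel, derPoly]

lemma lamPlusDel_X_mul (p : Polynomial V) :
    lamPlusDel d (X * p) = X * lamPlusDel d p := by
  simp [lamPlusDel, derPoly_X_mul hA]; ring

lemma lamPlusDel_neg_one_pow (k : ℕ) (p : Polynomial V) :
    lamPlusDel d ((-1 : Polynomial V) ^ k * p) = (-1 : Polynomial V) ^ k * lamPlusDel d p := by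
  rcases Nat.even_or_odd k with h | h
  · rw [h.neg_one_pow, one_mul, one_mul]
  · rw [h.neg_one_pow, neg_one_mul, neg_one_mul, lamPlusDel_neg hA hM]

lemma Liter_add (k : ℕ) (p q : Polynomial V) :
    (lamPlusDel d)^[k] (p + q) = (lamPlusDel d)^[k] p + (lamPlusDel d)^[k] q := by
  induction k generalizing p q with
  | zero => rfl
  | succ k ih =>
      rw [Function.iterate_succ_apply, Function.iterate_succ_apply,
        Function.iterate_succ_apply, lamPlusDel_add hA hM, ih]

lemma Liter_neg (k : ℕ) (p : Polynomial V) :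
    (lamPlusDel d)^[k] (-p) = -((lamPlusDel d)^[k] p) := by
  induction k generalizing p with
  | zero => rfl
  | succ k ih =>
      rw [Function.iterate_succ_apply, Function.iterate_succ_apply,
        lamPlusDel_neg hA hM, ih]

lemma Liter_zero (k : ℕ) : (lamPlusDel d)^[k] (0 : Polynomial V) = 0 := by
  induction k with
  | zero => rfl
  | succ k ih => rw [Function.iterate_succ_apply, lamPlusDel_zero hA hM, ih]

lemma Liter_X_mul (k : ℕ) (p : Polynomial V) :
    (lamPlusDel d)^[k] (X * p) = X * (lamPlusDel d)^[k] p := by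
  induction k generalizing p with
  | zero => rfl
  | succ k ih =>
      rw [Function.iterate_succ_apply, Function.iterate_succ_apply,
        lamPlusDel_X_mul hA hM, ih]

lemma Liter_neg_one_pow (n k : ℕ) (p : Polynomial V) :
    (lamPlusDel d)^[k] ((-1 : Polynomial V) ^ n * p)
      = (-1 : Polynomial V) ^ n * (lamPlusDel d)^[k] p := by
  rcases Nat.even_or_odd n with h | h
  · rw [h.neg_one_pow, one_mul, one_mul]
  · rw [h.neg_one_pow, neg_one_mul, neg_one_mul, Liter_neg hA hM]

lemma Niter_eq (k : ℕ) (p : Polynomial V) :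
    (negLamDel d)^[k] p = (lamPlusDel d)^[k] ((-1 : Polynomial V) ^ k * p) := by
  induction k generalizing p with
  | zero => simp
  | succ k ih =>
      rw [Function.iterate_succ_apply, ih, negLamDel_eq hA hM,
        Function.iterate_succ_apply, lamPlusDel_neg_one_pow hA hM]
      congr 1
      ring

lemma Niter_add (k : ℕ) (p q : Polynomial V) :
    (negLamDel d)^[k] (p + q) = (negLamDel d)^[k] p + (negLamDel d)^[k] q := by
  rw [Niter_eq hA hM, Niter_eq hA hM, Niter_eq hA hM, mul_add, Liter_add hA hM]

lemma Niter_zero (k : ℕ) : (negLamDel d)^[k] (0 : Polynomial V) = 0 := by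
  rw [Niter_eq hA hM, mul_zero, Liter_zero hA hM]

lemma Niter_neg (k : ℕ) (p : Polynomial V) :
    (negLamDel d)^[k] (-p) = -((negLamDel d)^[k] p) := by
  rw [Niter_eq hA hM, Niter_eq hA hM, ← Liter_neg hA hM]
  congr 1
  ring

lemma Liter_C_one (k : ℕ) : (lamPlusDel d)^[k] (Polynomial.C (1 : V)) = X ^ k := by
  induction k with
  | zero => simp
  | succ k ih =>
      rw [Function.iterate_succ_apply', ih]
      have hXp : derPoly d (X ^ k : Polynomial V) = 0 := by
        ext n
        rw [derPoly_coeff hA, Polynomial.coeff_X_pow, Polynomial.coeff_zero]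
        split_ifs with h
        · exact d_one hM
        · exact d_zero hA
      rw [lamPlusDel, hXp, add_zero, pow_succ]
      ring

lemma Niter_C_one (k : ℕ) :
    (negLamDel d)^[k] (Polynomial.C (1 : V)) = (-1 : Polynomial V) ^ k * X ^ k := by
  rw [Niter_eq hA hM, Liter_neg_one_pow hA hM, Liter_C_one hA hM]

end ops

section ops2
variable {d : V → V} (hA : ∀ a b, d (a + b) = d a + d b)
  (hM : ∀ a b, d (a * b) = a * d b + d a * b)
include hA hM

lemma appP_monomial (k : ℕ) (a : V) (w : Polynomial V) :
    appP d (Polynomial.monomial k a) w = Polynomial.C a * (lamPlusDel d)^[k] w := by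
  refine Polynomial.sum_monomial_index a _ ?_
  simp

lemma appP_add_left (p q w : Polynomial V) :
    appP d (p + q) w = appP d p w + appP d q w := by
  refine Polynomial.sum_add_index p q _ (fun i => by simp) (fun a b₁ b₂ => by
    simp [add_mul])

lemma appP_zero_left (w : Polynomial V) : appP d 0 w = 0 := by
  simp [appP]

lemma appP_neg_left (p w : Polynomial V) : appP d (-p) w = -appP d p w := by
  have h := appP_add_left hA hM p (-p) w
  rw [add_neg_cancel, appP_zero_left hA hM] at h
  linear_combination -h

lemma appP_add_right (p w₁ w₂ : Polynomial V) :
    appP d p (w₁ + w₂) = appP d p w₁ + appP d p w₂ := by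
  induction p using Polynomial.induction_on' with
  | add p q hp hq =>
      rw [appP_add_left hA hM, appP_add_left hA hM, appP_add_left hA hM, hp, hq]
      ring
  | monomial n a =>
      rw [appP_monomial hA hM, appP_monomial hA hM, appP_monomial hA hM, Liter_add hA hM]
      ring

lemma appP_zero_right (p : Polynomial V) : appP d p 0 = 0 := by
  induction p using Polynomial.induction_on' with
  | add p q hp hq => rw [appP_add_left hA hM, hp, hq, add_zero]
  | monomial n a => rw [appP_monomial hA hM, Liter_zero hA hM, mul_zero]

lemma appP_C_left (a : V) (w : Polynomial V) :
    appP d (Polynomial.C a) w = Polynomial.C a * w := by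
  rw [← Polynomial.monomial_zero_left, appP_monomial hA hM]
  rfl

lemma appP_X_mul_right (p w : Polynomial V) :
    appP d p (X * w) = X * appP d p w := by
  induction p using Polynomial.induction_on' with
  | add p q hp hq => rw [appP_add_left hA hM, appP_add_left hA hM, hp, hq, mul_add]
  | monomial n a =>
      rw [appP_monomial hA hM, appP_monomial hA hM, Liter_X_mul hA hM]
      ring

lemma appP_C_one_right (p : Polynomial V) : appP d p (Polynomial.C 1) = p := by
  induction p using Polynomial.induction_on' with
  | add p q hp hq => rw [appP_add_left hA hM, hp, hq]
  | monomial n a =>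
      rw [appP_monomial hA hM, Liter_C_one hA hM, Polynomial.C_mul_X_pow_eq_monomial]

-- F2
lemma lamPlusDel_appP (p w : Polynomial V) :
    lamPlusDel d (appP d p w) = appP d (lamPlusDel d p) w := by
  induction p using Polynomial.induction_on' with
  | add p q hp hq =>
      rw [appP_add_left hA hM, lamPlusDel_add hA hM, hp, hq, lamPlusDel_add hA hM,
        appP_add_left hA hM]
  | monomial n a =>
      rw [appP_monomial hA hM]
      have h1 : lamPlusDel d (Polynomial.C a * (lamPlusDel d)^[n] w)
          = Polynomial.C a * (lamPlusDel d)^[n+1] w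
            + Polynomial.C (d a) * (lamPlusDel d)^[n] w := by
        rw [lamPlusDel, derPoly_mul hA hM, derPoly_C hA, Function.iterate_succ_apply',
          lamPlusDel]
        ring
      have h2 : lamPlusDel d (Polynomial.monomial n a)
          = Polynomial.monomial (n+1) a + Polynomial.monomial n (d a) := by
        rw [← Polynomial.C_mul_X_pow_eq_monomial, ← Polynomial.C_mul_X_pow_eq_monomial,
          ← Polynomial.C_mul_X_pow_eq_monomial, lamPlusDel, derPoly_mul hA hM, derPoly_C hA]
        have hXp : derPoly d (X ^ n : Polynomial V) = 0 := by
          ext m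
          rw [derPoly_coeff hA, Polynomial.coeff_X_pow, Polynomial.coeff_zero]
          split_ifs
          · exact d_one hM
          · exact d_zero hA
        rw [hXp]
        ring
      rw [h1, h2, appP_add_left hA hM, appP_monomial hA hM, appP_monomial hA hM]

lemma Liter_appP (k : ℕ) (p w : Polynomial V) :
    (lamPlusDel d)^[k] (appP d p w) = appP d ((lamPlusDel d)^[k] p) w := by
  induction k generalizing p with
  | zero => rfl
  | succ k ih =>
      rw [Function.iterate_succ_apply, Function.iterate_succ_apply,
        lamPlusDel_appP hA hM, ih]

lemma negLamDel_appP (p w : Polynomial V) :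
    negLamDel d (appP d p w) = appP d (negLamDel d p) w := by
  rw [negLamDel_eq hA hM, negLamDel_eq hA hM, lamPlusDel_appP hA hM, appP_neg_left hA hM]

lemma Niter_appP (k : ℕ) (p w : Polynomial V) :
    (negLamDel d)^[k] (appP d p w) = appP d ((negLamDel d)^[k] p) w := by
  induction k generalizing p with
  | zero => rfl
  | succ k ih =>
      rw [Function.iterate_succ_apply, Function.iterate_succ_apply,
        negLamDel_appP hA hM, ih]

-- C a * appP q w = appP (C a * q) w
lemma C_mul_appP (a : V) (q w : Polynomial V) :
    Polynomial.C a * appP d q w = appP d (Polynomial.C a * q) w := by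
  induction q using Polynomial.induction_on' with
  | add p q hp hq =>
      rw [appP_add_left hA hM, mul_add, hp, hq, mul_add, appP_add_left hA hM]
  | monomial n b =>
      rw [appP_monomial hA hM, Polynomial.C_mul_monomial, appP_monomial hA hM,
        Polynomial.C_mul]
      ring

-- F3
lemma appP_appP (p q w : Polynomial V) :
    appP d p (appP d q w) = appP d (appP d p q) w := by
  induction p using Polynomial.induction_on' with
  | add p q' hp hq =>
      rw [appP_add_left hA hM, appP_add_left hA hM, hp, hq, appP_add_left hA hM]
  | monomial n a =>
      rw [appP_monomial hA hM, appP_monomial hA hM]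
      induction n generalizing q with
      | zero =>
          rw [Function.iterate_zero_apply, Function.iterate_zero_apply, C_mul_appP hA hM]
      | succ n ih =>
          rw [Function.iterate_succ_apply, Function.iterate_succ_apply,
            lamPlusDel_appP hA hM, ih]

end ops2

section sk
variable {d : V → V} (hA : ∀ a b, d (a + b) = d a + d b)
  (hM : ∀ a b, d (a * b) = a * d b + d a * b)
include hA hM

lemma sk_add (p q : Polynomial V) :
    skewTransform d (p + q) = skewTransform d p + skewTransform d q := by
  unfold skewTransform
  rw [Polynomial.sum_add_index p q _ (fun i => by rw [Polynomial.C_0, Niter_zero hA hM])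
    (fun a b₁ b₂ => by rw [Polynomial.C_add, Niter_add hA hM])]
  ring

lemma sk_zero : skewTransform d (0 : Polynomial V) = 0 := by
  unfold skewTransform
  rw [Polynomial.sum_zero_index, neg_zero]

lemma sk_neg (p : Polynomial V) : skewTransform d (-p) = -skewTransform d p := by
  have h := sk_add hA hM p (-p)
  rw [add_neg_cancel, sk_zero hA hM] at h
  linear_combination -h

lemma sk_monomial (n : ℕ) (a : V) :
    skewTransform d (Polynomial.monomial n a) = -((negLamDel d)^[n] (Polynomial.C a)) := by
  unfold skewTransform
  rw [Polynomial.sum_monomial_index a _ (by rw [Polynomial.C_0, Niter_zero hA hM])]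

lemma sk_C (a : V) : skewTransform d (Polynomial.C a) = -Polynomial.C a := by
  rw [← Polynomial.monomial_zero_left, sk_monomial hA hM, Function.iterate_zero_apply,
    Polynomial.monomial_zero_left]

lemma negLamDel_add (p q : Polynomial V) :
    negLamDel d (p + q) = negLamDel d p + negLamDel d q := Niter_add hA hM 1 p q

lemma negLamDel_neg (p : Polynomial V) : negLamDel d (-p) = -negLamDel d p :=
  Niter_neg hA hM 1 p

lemma sk_X_mul (p : Polynomial V) :
    skewTransform d (X * p) = negLamDel d (skewTransform d p) := by
  induction p using Polynomial.induction_on' with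
  | add p q hp hq =>
      rw [mul_add, sk_add hA hM, sk_add hA hM, hp, hq, negLamDel_add hA hM]
  | monomial n a =>
      rw [Polynomial.X_mul_monomial, sk_monomial hA hM, sk_monomial hA hM,
        Function.iterate_succ_apply', negLamDel_neg hA hM]

lemma sk_Xpow_mul (m : ℕ) (p : Polynomial V) :
    skewTransform d (X ^ m * p) = (negLamDel d)^[m] (skewTransform d p) := by
  induction m generalizing p with
  | zero => rw [pow_zero, one_mul, Function.iterate_zero_apply]
  | succ m ih =>
      have h : (X : Polynomial V) ^ (m + 1) * p = X ^ m * (X * p) := by ring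
      rw [h, ih, sk_X_mul hA hM, ← Function.iterate_succ_apply]

lemma negLamDel_C_mul (b : V) (y : Polynomial V) :
    negLamDel d (Polynomial.C b * y)
      = Polynomial.C b * negLamDel d y - Polynomial.C (d b) * y := by
  unfold negLamDel
  rw [derPoly_mul hA hM, derPoly_C hA]
  ring

lemma sk_C_mul_Liter_C (k : ℕ) (a : V) : ∀ b : V,
    skewTransform d (Polynomial.C a * (lamPlusDel d)^[k] (Polynomial.C b))
      = -(Polynomial.C b * (negLamDel d)^[k] (Polynomial.C a)) := by
  induction k with
  | zero =>
      intro b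
      rw [Function.iterate_zero_apply, Function.iterate_zero_apply, ← Polynomial.C_mul,
        sk_C hA hM, Polynomial.C_mul]
      ring
  | succ k ih =>
      intro b
      have hLC : lamPlusDel d (Polynomial.C b) = X * Polynomial.C b + Polynomial.C (d b) := by
        rw [lamPlusDel, derPoly_C hA]
      rw [Function.iterate_succ_apply, hLC, Liter_add hA hM, mul_add, sk_add hA hM,
        Liter_X_mul hA hM]
      have h1 : Polynomial.C a * (X * (lamPlusDel d)^[k] (Polynomial.C b))
          = X * (Polynomial.C a * (lamPlusDel d)^[k] (Polynomial.C b)) := by ring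
      rw [h1, sk_X_mul hA hM, ih b, ih (d b), negLamDel_neg hA hM, negLamDel_C_mul hA hM,
        Function.iterate_succ_apply']
      ring

-- F4 / (ML)
lemma sk_appP_C (p : Polynomial V) (b : V) :
    skewTransform d (appP d p (Polynomial.C b)) = Polynomial.C b * skewTransform d p := by
  induction p using Polynomial.induction_on' with
  | add p q hp hq =>
      rw [appP_add_left hA hM, sk_add hA hM, hp, hq, sk_add hA hM, mul_add]
  | monomial n a =>
      rw [appP_monomial hA hM, sk_C_mul_Liter_C hA hM, sk_monomial hA hM]
      ring

lemma appP_Xpow_mul_right (m : ℕ) (p w : Polynomial V) :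
    appP d p (X ^ m * w) = X ^ m * appP d p w := by
  induction m generalizing w with
  | zero => rw [pow_zero, one_mul, one_mul]
  | succ m ih =>
      rw [pow_succ, mul_comm (X ^ m) X, mul_assoc, appP_X_mul_right hA hM, ih]
      ring

-- (ML')
lemma sk_appP (p z : Polynomial V) :
    skewTransform d (appP d p z)
      = z.sum fun m c => (negLamDel d)^[m] (Polynomial.C c * skewTransform d p) := by
  induction z using Polynomial.induction_on' with
  | add z₁ z₂ h1 h2 =>
      rw [appP_add_right hA hM, sk_add hA hM, h1, h2,
        Polynomial.sum_add_index z₁ z₂ _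
          (fun i => by rw [Polynomial.C_0, zero_mul, Niter_zero hA hM])
          (fun a b₁ b₂ => by rw [Polynomial.C_add, add_mul, Niter_add hA hM])]
  | monomial m c =>
      have hmc : (Polynomial.monomial m c : Polynomial V) = X ^ m * Polynomial.C c := by
        rw [← Polynomial.C_mul_X_pow_eq_monomial]; ring
      rw [hmc, appP_Xpow_mul_right hA hM, sk_Xpow_mul hA hM, sk_appP_C hA hM, ← hmc,
        Polynomial.sum_monomial_index c _
          (by rw [Polynomial.C_0, zero_mul, Niter_zero hA hM])]

-- (ML2)
lemma sum_N_eq (p u : Polynomial V) :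
    (p.sum fun m c => (negLamDel d)^[m] (Polynomial.C c * u))
      = -(appP d (skewTransform d p) u) := by
  induction p using Polynomial.induction_on' with
  | add p q hp hq =>
      rw [Polynomial.sum_add_index p q _
          (fun i => by rw [Polynomial.C_0, zero_mul, Niter_zero hA hM])
          (fun a b₁ b₂ => by rw [Polynomial.C_add, add_mul, Niter_add hA hM]),
        hp, hq, sk_add hA hM, appP_add_left hA hM]
      ring
  | monomial m c =>
      rw [Polynomial.sum_monomial_index c _
          (by rw [Polynomial.C_0, zero_mul, Niter_zero hA hM]),
        sk_monomial hA hM, appP_neg_left hA hM, neg_neg, ← appP_C_left hA hM (a := c) (w := u),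
        Niter_appP hA hM]

-- step 7 sign lemma
lemma sk_appP_Niter_C_one (h : Polynomial V) (m : ℕ) :
    skewTransform d (appP d h ((negLamDel d)^[m] (Polynomial.C 1)))
      = (lamPlusDel d)^[m] (skewTransform d h) := by
  rw [sk_appP hA hM, Niter_C_one hA hM]
  have hz : ((-1 : Polynomial V) ^ m * X ^ m : Polynomial V)
      = Polynomial.monomial m ((-1 : V) ^ m) := by
    rw [← Polynomial.C_mul_X_pow_eq_monomial, Polynomial.C_pow, Polynomial.C_neg,
      Polynomial.C_1]
  rw [hz, Polynomial.sum_monomial_index _ _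
      (by rw [Polynomial.C_0, zero_mul, Niter_zero hA hM]),
    Niter_eq hA hM]
  congr 1
  rw [Polynomial.C_pow, Polynomial.C_neg, Polynomial.C_1, ← mul_assoc, ← mul_pow,
    neg_mul_neg, one_mul, one_pow, one_mul]

end sk

section star
variable {d : V → V} (hA : ∀ a b, d (a + b) = d a + d b)
  (hM : ∀ a b, d (a * b) = a * d b + d a * b)
include hA hM

lemma appP_neg_right (p u : Polynomial V) : appP d p (-u) = -appP d p u := by
  have h := appP_add_right hA hM p u (-u)
  rw [add_neg_cancel, appP_zero_right hA hM] at h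
  linear_combination -h

lemma star_identity (c b : V) (n m : ℕ) (h : Polynomial V) :
    skewTransform d (Polynomial.C c *
        (lamPlusDel d)^[n] (appP d h ((negLamDel d)^[m] (Polynomial.C b))))
      = Polynomial.C b *
        (lamPlusDel d)^[m] (appP d (skewTransform d h)
          ((negLamDel d)^[n] (Polynomial.C c))) := by
  have e1 : (negLamDel d)^[m] (Polynomial.C b)
      = appP d ((negLamDel d)^[m] (Polynomial.C 1)) (Polynomial.C b) := by
    rw [← Niter_appP hA hM, appP_C_left hA hM, Polynomial.C_1, one_mul]
  rw [e1, appP_appP hA hM, Liter_appP hA hM, C_mul_appP hA hM, sk_appP_C hA hM]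
  have e2 : Polynomial.C c *
        (lamPlusDel d)^[n] (appP d h ((negLamDel d)^[m] (Polynomial.C 1)))
      = appP d (Polynomial.monomial n c)
          (appP d h ((negLamDel d)^[m] (Polynomial.C 1))) := by
    rw [appP_monomial hA hM]
  rw [e2, sk_appP hA hM, sk_monomial hA hM]
  rw [sum_N_eq hA hM _ (-(negLamDel d)^[n] (Polynomial.C c)),
    appP_neg_right hA hM, neg_neg, sk_appP_Niter_C_one hA hM, ← Liter_appP hA hM]

end star

/-- The Master Formula λ-bracket associated to `H : I × I → (Polynomial V)` on the
algebra of differential polynomials `V = MvPolynomial (I × ℕ) F`. -/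
noncomputable def masterBracket {F : Type*} [Field F] {I : Type*}
    (der : MvPolynomial (I × ℕ) F → MvPolynomial (I × ℕ) F)
    (H : I → I → Polynomial (MvPolynomial (I × ℕ) F))
    (f g : MvPolynomial (I × ℕ) F) : Polynomial (MvPolynomial (I × ℕ) F) :=
  ∑ᶠ p : I × ℕ, ∑ᶠ q : I × ℕ,
    Polynomial.C (MvPolynomial.pderiv q g) *
      (lamPlusDel der)^[q.2]
        ((H q.1 p.1).sum fun k a =>
          Polynomial.C a *
            (lamPlusDel der)^[k]
              ((negLamDel der)^[p.2] (Polynomial.C (MvPolynomial.pderiv p f))))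

section mb
variable {F : Type*} [Field F] {I : Type*}
variable {d : MvPolynomial (I × ℕ) F → MvPolynomial (I × ℕ) F}
  (hA : ∀ a b, d (a + b) = d a + d b)
  (hM : ∀ a b, d (a * b) = a * d b + d a * b)
include hA hM

local notation "Vp" => MvPolynomial (I × ℕ) F

lemma sk_finset_sum {α : Type*} (s : Finset α) (G : α → Polynomial Vp) :
    skewTransform d (∑ i ∈ s, G i) = ∑ i ∈ s, skewTransform d (G i) := by
  classical
  induction s using Finset.induction_on with
  | empty => simpa using sk_zero hA hM
  | insert a s' h ih =>
      rw [Finset.sum_insert h, Finset.sum_insert h, sk_add hA hM, ih]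

lemma mbterm_zero_left (H : I → I → Polynomial Vp) (f g : Vp) (p q : I × ℕ)
    (h : MvPolynomial.pderiv p f = 0) :
    Polynomial.C (MvPolynomial.pderiv q g) *
      (lamPlusDel d)^[q.2] (appP d (H q.1 p.1)
        ((negLamDel d)^[p.2] (Polynomial.C (MvPolynomial.pderiv p f)))) = 0 := by
  rw [h, Polynomial.C_0, Niter_zero hA hM, appP_zero_right hA hM, Liter_zero hA hM, mul_zero]

lemma mbterm_zero_right (H : I → I → Polynomial Vp) (f g : Vp) (p q : I × ℕ)
    (h : MvPolynomial.pderiv q g = 0) :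
    Polynomial.C (MvPolynomial.pderiv q g) *
      (lamPlusDel d)^[q.2] (appP d (H q.1 p.1)
        ((negLamDel d)^[p.2] (Polynomial.C (MvPolynomial.pderiv p f)))) = 0 := by
  rw [h, Polynomial.C_0, zero_mul]

lemma mb_eq_sum (H : I → I → Polynomial Vp) (f g : Vp) (Sp Sq : Finset (I × ℕ))
    (hp : ∀ p : I × ℕ, p ∉ Sp → MvPolynomial.pderiv p f = 0)
    (hq : ∀ q : I × ℕ, q ∉ Sq → MvPolynomial.pderiv q g = 0) :
    masterBracket d H f g = ∑ p ∈ Sp, ∑ q ∈ Sq,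
      Polynomial.C (MvPolynomial.pderiv q g) *
        (lamPlusDel d)^[q.2] (appP d (H q.1 p.1)
          ((negLamDel d)^[p.2] (Polynomial.C (MvPolynomial.pderiv p f)))) := by
  rw [show masterBracket d H f g = ∑ᶠ p : I × ℕ, ∑ᶠ q : I × ℕ,
      Polynomial.C (MvPolynomial.pderiv q g) *
        (lamPlusDel d)^[q.2] (appP d (H q.1 p.1)
          ((negLamDel d)^[p.2] (Polynomial.C (MvPolynomial.pderiv p f)))) from rfl]
  rw [finsum_eq_finset_sum_of_support_subset _ (s := Sp)
      (Function.support_subset_iff'.mpr fun p hps => by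
        rw [funext fun q => mbterm_zero_left hA hM H f g p q (hp p hps)]
        exact finsum_zero)]
  refine Finset.sum_congr rfl fun p _ => ?_
  exact finsum_eq_finset_sum_of_support_subset _ (s := Sq)
      (Function.support_subset_iff'.mpr fun q hqs =>
        mbterm_zero_right hA hM H f g p q (hq q hqs))

lemma sk_masterBracket (H : I → I → Polynomial Vp) (f g : Vp) :
    skewTransform d (masterBracket d H g f)
      = masterBracket d (fun i j => skewTransform d (H j i)) f g := by
  classical
  have hf : ∀ p : I × ℕ, p ∉ f.vars → MvPolynomial.pderiv p f = 0 := fun p hp =>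
    MvPolynomial.pderiv_eq_zero_of_notMem_vars hp
  have hg : ∀ p : I × ℕ, p ∉ g.vars → MvPolynomial.pderiv p g = 0 := fun p hp =>
    MvPolynomial.pderiv_eq_zero_of_notMem_vars hp
  rw [mb_eq_sum hA hM H g f g.vars f.vars hg hf,
    mb_eq_sum hA hM _ f g f.vars g.vars hf hg,
    sk_finset_sum hA hM]
  rw [Finset.sum_comm]
  refine Finset.sum_congr rfl fun q _ => ?_
  rw [sk_finset_sum hA hM]
  refine Finset.sum_congr rfl fun p _ => ?_
  exact star_identity hA hM _ _ _ _ _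

lemma mb_generators (H : I → I → Polynomial Vp) (i j : I) :
    masterBracket d H (MvPolynomial.X (i, 0)) (MvPolynomial.X (j, 0)) = H j i := by
  classical
  rw [show masterBracket d H (MvPolynomial.X (i, 0)) (MvPolynomial.X (j, 0))
      = ∑ᶠ p : I × ℕ, ∑ᶠ q : I × ℕ,
      Polynomial.C (MvPolynomial.pderiv q (MvPolynomial.X (j, 0) : Vp)) *
        (lamPlusDel d)^[q.2] (appP d (H q.1 p.1)
          ((negLamDel d)^[p.2]
            (Polynomial.C (MvPolynomial.pderiv p (MvPolynomial.X (i, 0) : Vp))))) from rfl]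
  rw [finsum_eq_single _ ((i, 0) : I × ℕ) (fun p hps => by
      rw [funext fun q => mbterm_zero_left hA hM H _ _ p q
        (MvPolynomial.pderiv_X_of_ne (Ne.symm hps))]
      exact finsum_zero)]
  rw [finsum_eq_single _ ((j, 0) : I × ℕ) (fun q hqs =>
      mbterm_zero_right hA hM H _ _ _ q (MvPolynomial.pderiv_X_of_ne (Ne.symm hqs)))]
  rw [MvPolynomial.pderiv_X_self, MvPolynomial.pderiv_X_self]
  simp only [Function.iterate_zero_apply]
  rw [appP_C_one_right hA hM, Polynomial.C_1, one_mul]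

end mb

theorem master_formula_skew_symmetry_iff
    (F : Type*) [Field F] [CharZero F] (I : Type*)
    (H : I → I → Polynomial (MvPolynomial (I × ℕ) F)) :
    let der : MvPolynomial (I × ℕ) F → MvPolynomial (I × ℕ) F :=
      ⇑(MvPolynomial.mkDerivation F
          (fun p : I × ℕ => (MvPolynomial.X (p.1, p.2 + 1) : MvPolynomial (I × ℕ) F)))
    let br := masterBracket der H
    ((∀ f g : MvPolynomial (I × ℕ) F, br f g = skewTransform der (br g f)) ↔
      (∀ i j : I, br (MvPolynomial.X (i, 0)) (MvPolynomial.X (j, 0)) =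
        skewTransform der (br (MvPolynomial.X (j, 0)) (MvPolynomial.X (i, 0))))) ∧
    ((∀ i j : I, br (MvPolynomial.X (i, 0)) (MvPolynomial.X (j, 0)) =
        skewTransform der (br (MvPolynomial.X (j, 0)) (MvPolynomial.X (i, 0)))) ↔
      (∀ i j : I, H i j = skewTransform der (H j i))) := by
  intro der br
  have hA : ∀ a b : MvPolynomial (I × ℕ) F, der (a + b) = der a + der b := fun a b =>
    map_add _ a b
  have hM : ∀ a b : MvPolynomial (I × ℕ) F, der (a * b) = a * der b + der a * b := by
    intro a b
    rw [show der (a * b) = a • der b + b • der a from Derivation.leibniz _ a b,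
      smul_eq_mul, smul_eq_mul]
    ring
  refine ⟨⟨fun hall i j => hall _ _, fun hgen f g => ?_⟩,
    ⟨fun hgen i j => ?_, fun hskew i j => ?_⟩⟩
  · have hH : (fun i j => skewTransform der (H j i)) = H := by
      funext i j
      have h1 : masterBracket der H (MvPolynomial.X (j, 0)) (MvPolynomial.X (i, 0))
          = skewTransform der
            (masterBracket der H (MvPolynomial.X (i, 0)) (MvPolynomial.X (j, 0))) :=
        hgen j i
      rw [mb_generators hA hM, mb_generators hA hM] at h1
      exact h1.symm
    show masterBracket der H f g = skewTransform der (masterBracket der H g f)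
    rw [sk_masterBracket hA hM, hH]
  · have h1 : masterBracket der H (MvPolynomial.X (j, 0)) (MvPolynomial.X (i, 0))
        = skewTransform der
          (masterBracket der H (MvPolynomial.X (i, 0)) (MvPolynomial.X (j, 0))) :=
      hgen j i
    rw [mb_generators hA hM, mb_generators hA hM] at h1
    exact h1
  · show masterBracket der H (MvPolynomial.X (i, 0)) (MvPolynomial.X (j, 0))
      = skewTransform der
        (masterBracket der H (MvPolynomial.X (j, 0)) (MvPolynomial.X (i, 0)))
    rw [mb_generators hA hM, mb_generators hA hM]
    exact hskew j i
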